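/- Let k be even and consider k+2 creases bounding a run of k+1 equal angles flanked by strictly larger angles in a flat vertex fold. The number of ways to assign Mountain/Valley to these k+2 creases so that M - V = 0 is choose(k+2)((k+2)/2). -/
import Mathlib


/-- Equal angles in a row, `k` even: the number of MV assignments of the `k + 2`
creases bounding the run with `M - V = 0`, i.e. exactly `(k+2)/2` mountains, is
`choose (k+2) ((k+2)/2)`. -/
theorem run_count_even (k : ℕ) (hk : Even k) :
    (Finset.univ.filter (fun f : Fin (k + 2) → Bool =>
        (Finset.univ.filter (fun i => f i = true)).card = (k + 2) / 2)).card =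
      Nat.choose (k + 2) ((k + 2) / 2) := by
  classical
  have h : Nat.choose (k + 2) ((k + 2) / 2) =
      (Finset.powersetCard ((k + 2) / 2) (Finset.univ : Finset (Fin (k + 2)))).card := by
    rw [Finset.card_powersetCard, Finset.card_univ, Fintype.card_fin]
  rw [h]
  apply Finset.card_bij (fun f _ => Finset.univ.filter (fun i => f i = true))
  · intro f hf
    simp only [Finset.mem_filter, Finset.mem_univ, true_and] at hf
    simp [Finset.mem_powersetCard, hf]
  · intro f hf g hg hfg
    funext i
    have := Finset.ext_iff.mp hfg i
    simp only [Finset.mem_filter, Finset.mem_univ, true_and] at this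
    cases hfi : f i <;> cases hgi : g i <;> simp_all
  · intro s hs
    simp only [Finset.mem_powersetCard] at hs
    refine ⟨fun i => i ∈ s, ?_, ?_⟩
    · simp [hs.2]
    · ext i; simp
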